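/- Suppose ℓ ∈ ι satisfies ℓ ∉ pa i for every i ∈ ι (in particular ℓ ∉ pa ℓ), and the table at ℓ is normalized: ∑_{a ∈ α ℓ} p ℓ x a = 1 for every configuration x. Then for every configuration x : Π j, α j, ∑_{a ∈ α ℓ} P (Function.update x ℓ a) = ∏_{i ≠ ℓ} p i x (x i). In particular, marginalizing the joint weight over a leaf variable ℓ yields the product of the remaining factors. -/
import Mathlib


open Finset

/-- marginalizing a leaf variable: if `ℓ` is not a parent of any
variable and the table at `ℓ` is normalized, then summing the joint weight
`P x = ∏ i, p i x (x i)` over the value at `ℓ` yields the product of the remaining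
factors. -/
theorem sum_update_joint_eq_prod_erase {ι : Type*} [Fintype ι] [DecidableEq ι]
    (α : ι → Type*) [∀ i, Fintype (α i)] [∀ i, Nonempty (α i)]
    (pa : ι → Finset ι)
    (p : ∀ i, (∀ j, α j) → α i → ℝ)
    (hlocal : ∀ i, ∀ x y : ∀ j, α j, (∀ j ∈ pa i, x j = y j) → ∀ a : α i, p i x a = p i y a)
    (P : (∀ j, α j) → ℝ) (hP : ∀ x : ∀ j, α j, P x = ∏ i, p i x (x i))
    (ℓ : ι) (hleaf : ∀ i, ℓ ∉ pa i)
    (hnorm : ∀ x : ∀ j, α j, ∑ a : α ℓ, p ℓ x a = 1) :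
    ∀ x : ∀ j, α j,
      ∑ a : α ℓ, P (Function.update x ℓ a) = ∏ i ∈ univ.erase ℓ, p i x (x i) := by
  intro x
  have key : ∀ a : α ℓ,
      P (Function.update x ℓ a) = (∏ i ∈ univ.erase ℓ, p i x (x i)) * p ℓ x a := by
    intro a
    rw [hP]
    rw [← Finset.prod_erase_mul (a := ℓ) _ _ (mem_univ ℓ)]
    congr 1
    · apply Finset.prod_congr rfl
      intro i hi
      have hne : i ≠ ℓ := (Finset.mem_erase.mp hi).1
      rw [Function.update_of_ne hne]
      exact hlocal i _ _ (fun j hj => Function.update_of_ne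
        (fun h => hleaf i (by rwa [h] at hj)) _ _) _
    · rw [Function.update_self]
      exact hlocal ℓ _ _ (fun j hj => Function.update_of_ne
        (fun h => hleaf ℓ (by rwa [h] at hj)) _ _) _
  simp only [key]
  rw [← Finset.mul_sum, hnorm, mul_one]
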